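/- Let n ≥ 2 and let f be the rotation map f(x) = (x₁ cos θ − x₂ sin θ, x₂ cos θ + x₁ sin θ, x₃, …, xₙ) with θ = log(x₁² + x₂²). Then at every point x ≠ 0 with x₁² + x₂² > 0, the angular dilatation of f at x with respect to the origin equals 1: with A = f′(x) and u = x/|x|, one has D(A,u) = det A / ℓ(A,u)ⁿ = 1. -/

import Mathlib

open Metric

/-- The rotation map
`f(x) = (x₁ cos θ − x₂ sin θ, x₂ cos θ + x₁ sin θ, x₃, …, xₙ)` with
`θ = log (x₁² + x₂²)`. -/
noncomputable def rotMap (n : ℕ) (hn : 2 ≤ n)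
    (x : EuclideanSpace ℝ (Fin n)) : EuclideanSpace ℝ (Fin n) :=
  (WithLp.equiv 2 (Fin n → ℝ)).symm fun i =>
    let θ : ℝ := Real.log (x ⟨0, by omega⟩ ^ 2 + x ⟨1, by omega⟩ ^ 2)
    if (i : ℕ) = 0 then
      x ⟨0, by omega⟩ * Real.cos θ - x ⟨1, by omega⟩ * Real.sin θ
    else if (i : ℕ) = 1 then
      x ⟨1, by omega⟩ * Real.cos θ + x ⟨0, by omega⟩ * Real.sin θ
    else x i

/-- `ℓ(A,u) = inf { |A h| / |h ⬝ u| : |h| = 1, h ⬝ u ≠ 0 }`. -/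
noncomputable def ellDir (n : ℕ)
    (A : EuclideanSpace ℝ (Fin n) →L[ℝ] EuclideanSpace ℝ (Fin n))
    (u : EuclideanSpace ℝ (Fin n)) : ℝ :=
  sInf {r : ℝ | ∃ h : EuclideanSpace ℝ (Fin n),
    ‖h‖ = 1 ∧ (inner ℝ h u : ℝ) ≠ 0 ∧ r = ‖A h‖ / abs ((inner ℝ h u : ℝ))}

/-- Angular dilatation `D(A,u) = det A / ℓ(A,u)^n` (for `det A > 0`). -/
noncomputable def angDil (n : ℕ)
    (A : EuclideanSpace ℝ (Fin n) →L[ℝ] EuclideanSpace ℝ (Fin n))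
    (u : EuclideanSpace ℝ (Fin n)) : ℝ :=
  LinearMap.det (A : EuclideanSpace ℝ (Fin n) →ₗ[ℝ] EuclideanSpace ℝ (Fin n)) /
    (ellDir n A u) ^ n


open Real


section Aux

variable (n : ℕ)

/-- Component derivatives of the rotation map, as functionals on the plain pi space. -/
noncomputable def rotD (hn : 2 ≤ n) (x : EuclideanSpace ℝ (Fin n)) :
    Fin n → ((Fin n → ℝ) →L[ℝ] ℝ) := fun i =>
  let p := x ⟨0, by omega⟩
  let q := x ⟨1, by omega⟩
  let r2 := p ^ 2 + q ^ 2
  let θ := Real.log r2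
  let c := Real.cos θ
  let s := Real.sin θ
  if (i : ℕ) = 0 then
    (c - 2 * p * (q * c + p * s) / r2) • ContinuousLinearMap.proj (⟨0, by omega⟩ : Fin n)
      + (-s - 2 * q * (q * c + p * s) / r2) • ContinuousLinearMap.proj (⟨1, by omega⟩ : Fin n)
  else if (i : ℕ) = 1 then
    (s + 2 * p * (p * c - q * s) / r2) • ContinuousLinearMap.proj (⟨0, by omega⟩ : Fin n)
      + (c + 2 * q * (p * c - q * s) / r2) • ContinuousLinearMap.proj (⟨1, by omega⟩ : Fin n)
  else ContinuousLinearMap.proj i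

noncomputable def rotA (hn : 2 ≤ n) (x : EuclideanSpace ℝ (Fin n)) :
    EuclideanSpace ℝ (Fin n) →L[ℝ] EuclideanSpace ℝ (Fin n) :=
  (PiLp.continuousLinearEquiv 2 ℝ (fun _ : Fin n => ℝ)).symm.toContinuousLinearMap
    ∘L ContinuousLinearMap.pi (rotD n hn x)
    ∘L (PiLp.continuousLinearEquiv 2 ℝ (fun _ : Fin n => ℝ)).toContinuousLinearMap

theorem rotA_apply (hn : 2 ≤ n) (x h : EuclideanSpace ℝ (Fin n)) (i : Fin n) :
    rotA n hn x h i = rotD n hn x i h := rfl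

end Aux


section DerivTest
variable (n : ℕ)

theorem rotA_hasFDerivAt' (hn : 2 ≤ n) (x : EuclideanSpace ℝ (Fin n))
    (hx : 0 < x ⟨0, by omega⟩ ^ 2 + x ⟨1, by omega⟩ ^ 2) :
    HasFDerivAt (rotMap n hn) (rotA n hn x) x := by
  have h0n : 0 < n := by omega
  have h1n : 1 < n := by omega
  let i0 : Fin n := ⟨0, h0n⟩
  let i1 : Fin n := ⟨1, h1n⟩
  have hx' : 0 < x i0 ^ 2 + x i1 ^ 2 := hx
  set G : (Fin n → ℝ) → (Fin n → ℝ) := fun y i =>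
    if (i : ℕ) = 0 then
      y i0 * Real.cos (Real.log (y i0 ^ 2 + y i1 ^ 2))
        - y i1 * Real.sin (Real.log (y i0 ^ 2 + y i1 ^ 2))
    else if (i : ℕ) = 1 then
      y i1 * Real.cos (Real.log (y i0 ^ 2 + y i1 ^ 2))
        + y i0 * Real.sin (Real.log (y i0 ^ 2 + y i1 ^ 2))
    else y i with hG
  set xp : Fin n → ℝ := (WithLp.equiv 2 (Fin n → ℝ)) x with hxp
  have hGderiv : HasFDerivAt G (ContinuousLinearMap.pi (rotD n hn x)) xp := by
    apply hasFDerivAt_pi''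
    intro i
    rw [ContinuousLinearMap.proj_pi]
    set P0 : (Fin n → ℝ) →L[ℝ] ℝ := ContinuousLinearMap.proj i0 with hP0
    set P1 : (Fin n → ℝ) →L[ℝ] ℝ := ContinuousLinearMap.proj i1 with hP1
    have hproj0 : HasFDerivAt (fun y : Fin n → ℝ => y i0) P0 xp :=
      hasFDerivAt_apply (𝕜 := ℝ) i0 xp
    have hproj1 : HasFDerivAt (fun y : Fin n → ℝ => y i1) P1 xp :=
      hasFDerivAt_apply (𝕜 := ℝ) i1 xp
    have hxp0 : xp i0 = x i0 := rfl
    have hxp1 : xp i1 = x i1 := rfl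
    have hr : HasFDerivAt (fun y : Fin n → ℝ => y i0 ^ 2 + y i1 ^ 2)
        ((2 * x i0) • P0 + (2 * x i1) • P1) xp := by
      have H := ((hproj0.mul hproj0).add (hproj1.mul hproj1))
      have heq : (fun y : Fin n → ℝ => y i0 ^ 2 + y i1 ^ 2)
          = fun y : Fin n → ℝ => y i0 * y i0 + y i1 * y i1 := by
        funext y; ring
      rw [heq]
      refine H.congr_fderiv ?_
      ext1 y
      simp only [ContinuousLinearMap.add_apply, ContinuousLinearMap.smul_apply,
        hP0, hP1, ContinuousLinearMap.proj_apply, smul_eq_mul, hxp0, hxp1]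
      ring
    have hL : HasFDerivAt (fun y : Fin n → ℝ => Real.log (y i0 ^ 2 + y i1 ^ 2))
        ((x i0 ^ 2 + x i1 ^ 2)⁻¹ • ((2 * x i0) • P0 + (2 * x i1) • P1)) xp := by
      have hlog : HasDerivAt Real.log (x i0 ^ 2 + x i1 ^ 2)⁻¹ (xp i0 ^ 2 + xp i1 ^ 2) := by
        rw [hxp0, hxp1]
        exact Real.hasDerivAt_log (ne_of_gt hx')
      exact HasDerivAt.comp_hasFDerivAt (f := fun y : Fin n → ℝ => y i0 ^ 2 + y i1 ^ 2) xp hlog hr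
    have hcos : HasFDerivAt (fun y : Fin n → ℝ => Real.cos (Real.log (y i0 ^ 2 + y i1 ^ 2)))
        ((-Real.sin (Real.log (x i0 ^ 2 + x i1 ^ 2))) •
          ((x i0 ^ 2 + x i1 ^ 2)⁻¹ • ((2 * x i0) • P0 + (2 * x i1) • P1))) xp := by
      have hc : HasDerivAt Real.cos (-Real.sin (Real.log (x i0 ^ 2 + x i1 ^ 2)))
          (Real.log (xp i0 ^ 2 + xp i1 ^ 2)) := by
        rw [hxp0, hxp1]; exact Real.hasDerivAt_cos _
      exact HasDerivAt.comp_hasFDerivAt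
        (f := fun y : Fin n → ℝ => Real.log (y i0 ^ 2 + y i1 ^ 2)) xp hc hL
    have hsin : HasFDerivAt (fun y : Fin n → ℝ => Real.sin (Real.log (y i0 ^ 2 + y i1 ^ 2)))
        ((Real.cos (Real.log (x i0 ^ 2 + x i1 ^ 2))) •
          ((x i0 ^ 2 + x i1 ^ 2)⁻¹ • ((2 * x i0) • P0 + (2 * x i1) • P1))) xp := by
      have hc : HasDerivAt Real.sin (Real.cos (Real.log (x i0 ^ 2 + x i1 ^ 2)))
          (Real.log (xp i0 ^ 2 + xp i1 ^ 2)) := by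
        rw [hxp0, hxp1]; exact Real.hasDerivAt_sin _
      exact HasDerivAt.comp_hasFDerivAt
        (f := fun y : Fin n → ℝ => Real.log (y i0 ^ 2 + y i1 ^ 2)) xp hc hL
    by_cases hi0 : (i : ℕ) = 0
    · have hGi : (fun y : Fin n → ℝ => G y i)
          = fun y : Fin n → ℝ => y i0 * Real.cos (Real.log (y i0 ^ 2 + y i1 ^ 2))
            - y i1 * Real.sin (Real.log (y i0 ^ 2 + y i1 ^ 2)) := by
        funext y; simp only [hG, hi0, if_true, if_pos]
      rw [hGi]
      have H := (hproj0.mul hcos).sub (hproj1.mul hsin)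
      refine H.congr_fderiv ?_
      symm
      rw [rotD]
      rw [if_pos hi0]
      ext1 y
      simp only [ContinuousLinearMap.add_apply, ContinuousLinearMap.smul_apply,
        ContinuousLinearMap.sub_apply, hP0, hP1, ContinuousLinearMap.proj_apply,
        smul_eq_mul, hxp0, hxp1]
      have hne : x i0 ^ 2 + x i1 ^ 2 ≠ 0 := ne_of_gt hx'
      field_simp
      ring
    · by_cases hi1 : (i : ℕ) = 1
      · have hGi : (fun y : Fin n → ℝ => G y i)
            = fun y : Fin n → ℝ => y i1 * Real.cos (Real.log (y i0 ^ 2 + y i1 ^ 2))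
              + y i0 * Real.sin (Real.log (y i0 ^ 2 + y i1 ^ 2)) := by
          funext y; simp [hG, hi0, hi1]
        rw [hGi]
        have H := (hproj1.mul hcos).add (hproj0.mul hsin)
        refine H.congr_fderiv ?_
        symm
        rw [rotD]
        rw [if_neg hi0, if_pos hi1]
        ext1 y
        simp only [ContinuousLinearMap.add_apply, ContinuousLinearMap.smul_apply,
          hP0, hP1, ContinuousLinearMap.proj_apply, smul_eq_mul, hxp0, hxp1]
        have hne : x i0 ^ 2 + x i1 ^ 2 ≠ 0 := ne_of_gt hx'
        field_simp
        ring
      · have hGi : (fun y : Fin n → ℝ => G y i) = fun y : Fin n → ℝ => y i := by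
          funext y; simp [hG, hi0, hi1]
        rw [hGi, rotD]
        rw [if_neg hi0, if_neg hi1]
        exact hasFDerivAt_apply (𝕜 := ℝ) i xp
  set φ := PiLp.continuousLinearEquiv 2 ℝ (fun _ : Fin n => ℝ) with hφ
  have H2 := (φ.symm.toContinuousLinearMap.hasFDerivAt (x := G xp)).comp x
    (hGderiv.comp x (φ.toContinuousLinearMap.hasFDerivAt (x := x)))
  exact H2
end DerivTest

section DetTest
variable (n : ℕ)

theorem rotA_det (hn : 2 ≤ n) (x : EuclideanSpace ℝ (Fin n))
    (hx : 0 < x ⟨0, by omega⟩ ^ 2 + x ⟨1, by omega⟩ ^ 2) :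
    LinearMap.det ((rotA n hn x) : EuclideanSpace ℝ (Fin n) →ₗ[ℝ] EuclideanSpace ℝ (Fin n)) = 1 := by
  have h0n : 0 < n := by omega
  have h1n : 1 < n := by omega
  let i0 : Fin n := ⟨0, h0n⟩
  let i1 : Fin n := ⟨1, h1n⟩
  have hx' : 0 < x i0 ^ 2 + x i1 ^ 2 := hx
  have hne : x i0 ^ 2 + x i1 ^ 2 ≠ 0 := ne_of_gt hx'
  set φ := PiLp.continuousLinearEquiv 2 ℝ (fun _ : Fin n => ℝ) with hφ
  set e : (Fin n → ℝ) ≃ₗ[ℝ] EuclideanSpace ℝ (Fin n) := φ.symm.toLinearEquiv with he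
  have hconj : ((rotA n hn x) : EuclideanSpace ℝ (Fin n) →ₗ[ℝ] EuclideanSpace ℝ (Fin n))
      = (e : (Fin n → ℝ) →ₗ[ℝ] EuclideanSpace ℝ (Fin n)) ∘ₗ
        ((ContinuousLinearMap.pi (rotD n hn x) : (Fin n → ℝ) →ₗ[ℝ] (Fin n → ℝ)) ∘ₗ
          (e.symm : EuclideanSpace ℝ (Fin n) →ₗ[ℝ] (Fin n → ℝ))) := rfl
  rw [hconj, LinearMap.det_conj]
  rw [← LinearMap.det_toMatrix' ((ContinuousLinearMap.pi (rotD n hn x) :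
    (Fin n → ℝ) →ₗ[ℝ] (Fin n → ℝ)))]
  set M : Matrix (Fin n) (Fin n) ℝ := fun i j =>
    if (i : ℕ) = 0 then
      (if (j : ℕ) = 0 then
        Real.cos (Real.log (x i0 ^ 2 + x i1 ^ 2)) - 2 * x i0 *
          (x i1 * Real.cos (Real.log (x i0 ^ 2 + x i1 ^ 2)) +
            x i0 * Real.sin (Real.log (x i0 ^ 2 + x i1 ^ 2))) / (x i0 ^ 2 + x i1 ^ 2)
      else if (j : ℕ) = 1 then
        -Real.sin (Real.log (x i0 ^ 2 + x i1 ^ 2)) - 2 * x i1 *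
          (x i1 * Real.cos (Real.log (x i0 ^ 2 + x i1 ^ 2)) +
            x i0 * Real.sin (Real.log (x i0 ^ 2 + x i1 ^ 2))) / (x i0 ^ 2 + x i1 ^ 2)
      else 0)
    else if (i : ℕ) = 1 then
      (if (j : ℕ) = 0 then
        Real.sin (Real.log (x i0 ^ 2 + x i1 ^ 2)) + 2 * x i0 *
          (x i0 * Real.cos (Real.log (x i0 ^ 2 + x i1 ^ 2)) -
            x i1 * Real.sin (Real.log (x i0 ^ 2 + x i1 ^ 2))) / (x i0 ^ 2 + x i1 ^ 2)
      else if (j : ℕ) = 1 then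
        Real.cos (Real.log (x i0 ^ 2 + x i1 ^ 2)) + 2 * x i1 *
          (x i0 * Real.cos (Real.log (x i0 ^ 2 + x i1 ^ 2)) -
            x i1 * Real.sin (Real.log (x i0 ^ 2 + x i1 ^ 2))) / (x i0 ^ 2 + x i1 ^ 2)
      else 0)
    else (if i = j then 1 else 0) with hM
  have hMat : LinearMap.toMatrix' ((ContinuousLinearMap.pi (rotD n hn x) :
      (Fin n → ℝ) →ₗ[ℝ] (Fin n → ℝ))) = M := by
    ext i j
    rw [LinearMap.toMatrix'_apply]
    have happ : (ContinuousLinearMap.pi (rotD n hn x) : (Fin n → ℝ) →ₗ[ℝ] (Fin n → ℝ))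
        (Pi.single j 1) i
        = rotD n hn x i (Pi.single j 1) := rfl
    rw [happ]
    simp only [rotD, hM]
    have h00 : ((Pi.single j (1:ℝ) : Fin n → ℝ) i0) = if (j : ℕ) = 0 then 1 else 0 := by
      rw [Pi.single_apply]
      by_cases h : (j : ℕ) = 0
      · rw [if_pos h, if_pos (by exact Fin.ext h.symm)]
      · rw [if_neg h, if_neg (by intro hh; exact h (by rw [← hh]))]
    have h11 : ((Pi.single j (1:ℝ) : Fin n → ℝ) i1) = if (j : ℕ) = 1 then 1 else 0 := by
      rw [Pi.single_apply]
      by_cases h : (j : ℕ) = 1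
      · rw [if_pos h, if_pos (by exact Fin.ext h.symm)]
      · rw [if_neg h, if_neg (by intro hh; exact h (by rw [← hh]))]
    by_cases hi0 : (i : ℕ) = 0
    · rw [if_pos hi0, if_pos hi0]
      simp only [ContinuousLinearMap.add_apply, ContinuousLinearMap.smul_apply,
        ContinuousLinearMap.proj_apply, smul_eq_mul]
      rw [h00, h11]
      by_cases hj0 : (j : ℕ) = 0
      · have hj1 : ¬ (j : ℕ) = 1 := by omega
        rw [if_pos hj0, if_pos hj0, if_neg hj1]; ring
      · by_cases hj1 : (j : ℕ) = 1
        · rw [if_neg hj0, if_pos hj1, if_pos hj1, if_neg hj0]; ring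
        · rw [if_neg hj0, if_neg hj1, if_neg hj0, if_neg hj1]; ring
    · by_cases hi1 : (i : ℕ) = 1
      · rw [if_neg hi0, if_pos hi1, if_neg hi0, if_pos hi1]
        simp only [ContinuousLinearMap.add_apply, ContinuousLinearMap.smul_apply,
          ContinuousLinearMap.proj_apply, smul_eq_mul]
        rw [h00, h11]
        by_cases hj0 : (j : ℕ) = 0
        · have hj1 : ¬ (j : ℕ) = 1 := by omega
          rw [if_pos hj0, if_pos hj0, if_neg hj1]; ring
        · by_cases hj1 : (j : ℕ) = 1
          · rw [if_neg hj0, if_pos hj1, if_pos hj1, if_neg hj0]; ring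
          · rw [if_neg hj0, if_neg hj1, if_neg hj0, if_neg hj1]; ring
      · rw [if_neg hi0, if_neg hi1, if_neg hi0, if_neg hi1]
        simp only [ContinuousLinearMap.proj_apply, Pi.single_apply]
  rw [hMat]
  have h2n : 2 + (n - 2) = n := by omega
  set eq2 : Fin 2 ⊕ Fin (n - 2) ≃ Fin n := finSumFinEquiv.trans (finCongr h2n) with heq2
  have hval_inl : ∀ k : Fin 2, ((eq2 (Sum.inl k)) : ℕ) = (k : ℕ) := by
    intro k; simp [heq2, finSumFinEquiv]
  have hval_inr : ∀ k : Fin (n - 2), ((eq2 (Sum.inr k)) : ℕ) = 2 + (k : ℕ) := by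
    intro k; simp [heq2, finSumFinEquiv]
  rw [← Matrix.det_submatrix_equiv_self eq2 M]
  have hblock : M.submatrix eq2 eq2
      = Matrix.fromBlocks
          !![Real.cos (Real.log (x i0 ^ 2 + x i1 ^ 2)) - 2 * x i0 *
              (x i1 * Real.cos (Real.log (x i0 ^ 2 + x i1 ^ 2)) +
                x i0 * Real.sin (Real.log (x i0 ^ 2 + x i1 ^ 2))) / (x i0 ^ 2 + x i1 ^ 2),
            -Real.sin (Real.log (x i0 ^ 2 + x i1 ^ 2)) - 2 * x i1 *
              (x i1 * Real.cos (Real.log (x i0 ^ 2 + x i1 ^ 2)) +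
                x i0 * Real.sin (Real.log (x i0 ^ 2 + x i1 ^ 2))) / (x i0 ^ 2 + x i1 ^ 2);
            Real.sin (Real.log (x i0 ^ 2 + x i1 ^ 2)) + 2 * x i0 *
              (x i0 * Real.cos (Real.log (x i0 ^ 2 + x i1 ^ 2)) -
                x i1 * Real.sin (Real.log (x i0 ^ 2 + x i1 ^ 2))) / (x i0 ^ 2 + x i1 ^ 2),
            Real.cos (Real.log (x i0 ^ 2 + x i1 ^ 2)) + 2 * x i1 *
              (x i0 * Real.cos (Real.log (x i0 ^ 2 + x i1 ^ 2)) -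
                x i1 * Real.sin (Real.log (x i0 ^ 2 + x i1 ^ 2))) / (x i0 ^ 2 + x i1 ^ 2)]
          0 0 (1 : Matrix (Fin (n-2)) (Fin (n-2)) ℝ) := by
    ext i j
    cases i with
    | inl k =>
      cases j with
      | inl l =>
        rw [Matrix.submatrix_apply, Matrix.fromBlocks_apply₁₁]
        simp only [hM]
        rw [hval_inl k, hval_inl l]
        fin_cases k <;> fin_cases l <;> norm_num
      | inr l =>
        rw [Matrix.submatrix_apply, Matrix.fromBlocks_apply₁₂]
        simp only [hM, Matrix.zero_apply]
        rw [hval_inl k, hval_inr l]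
        have hk2 : (k : ℕ) < 2 := k.isLt
        split_ifs with h1 h2 h3 h4 h5 h6 h7 h8 <;> first | rfl | omega |
          (exfalso; have := congrArg Fin.val h6; rw [hval_inl, hval_inr] at this; omega) |
          (exfalso
           revert ‹eq2 (Sum.inl k) = eq2 (Sum.inr l)›
           intro hh; have := congrArg Fin.val hh; rw [hval_inl, hval_inr] at this; omega)
    | inr k =>
      cases j with
      | inl l =>
        rw [Matrix.submatrix_apply, Matrix.fromBlocks_apply₂₁]
        simp only [hM, Matrix.zero_apply]
        rw [hval_inr k, hval_inl l]
        have hl2 : (l : ℕ) < 2 := l.isLt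
        have hne2 : ¬ (eq2 (Sum.inr k) = eq2 (Sum.inl l)) := by
          intro h; have := congrArg Fin.val h; rw [hval_inr, hval_inl] at this; omega
        split_ifs <;> first | rfl | omega
      | inr l =>
        rw [Matrix.submatrix_apply, Matrix.fromBlocks_apply₂₂]
        simp only [hM, Matrix.one_apply]
        rw [hval_inr k, hval_inr l]
        have hiff : eq2 (Sum.inr k) = eq2 (Sum.inr l) ↔ k = l := by
          rw [Equiv.apply_eq_iff_eq]; exact Sum.inr_injective.eq_iff
        split_ifs with h1 h2 h3 h4 <;> first | rfl | omega | (exact absurd (hiff.1 ‹_›) ‹_›) |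
          (exact absurd (hiff.2 ‹_›) ‹_›)
  rw [hblock, Matrix.det_fromBlocks_zero₂₁, Matrix.det_one, mul_one, Matrix.det_fin_two_of]
  have hsc : Real.sin (Real.log (x i0 ^ 2 + x i1 ^ 2)) ^ 2
      + Real.cos (Real.log (x i0 ^ 2 + x i1 ^ 2)) ^ 2 = 1 :=
    Real.sin_sq_add_cos_sq _
  field_simp
  linear_combination ((x i0 ^ 2 + x i1 ^ 2) ^ 2) * hsc
end DetTest

section EllTest
variable (n : ℕ)


theorem key_ineq (p q h0 h1 A0 A1 W H2 X2 : ℝ) (hR : 0 < p ^ 2 + q ^ 2)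
    (hid : (A0 ^ 2 + A1 ^ 2) * (p ^ 2 + q ^ 2)
      = (p * h0 + q * h1) ^ 2 + ((p * h1 - q * h0) + 2 * (p * h0 + q * h1)) ^ 2)
    (hCS : W ^ 2 ≤ H2 * X2) (hH2 : 0 ≤ H2) (hX2 : 0 ≤ X2) :
    (h0 * p + h1 * q + W) ^ 2 ≤ (A0 ^ 2 + A1 ^ 2 + H2) * (p ^ 2 + q ^ 2 + X2) := by
  by_cases hX20 : X2 = 0
  · have hW2 : W ^ 2 ≤ 0 := by rw [hX20] at hCS; simpa using hCS
    have hW0 : W = 0 := by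
      have : W ^ 2 = 0 := le_antisymm hW2 (sq_nonneg W)
      exact pow_eq_zero_iff (two_ne_zero).symm.symm |>.1 this
    rw [hX20, hW0]
    nlinarith [hid, sq_nonneg (p * h1 - q * h0 + 2 * (p * h0 + q * h1)), hR, hH2,
      mul_nonneg hH2 hR.le]
  · have hX2pos : 0 < X2 := lt_of_le_of_ne hX2 (Ne.symm hX20)
    have hid3 : (A0 ^ 2 + A1 ^ 2) * (p ^ 2 + q ^ 2) * (X2 * (p ^ 2 + q ^ 2 + X2))
        = ((p * h0 + q * h1) ^ 2 + ((p * h1 - q * h0) + 2 * (p * h0 + q * h1)) ^ 2)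
          * (X2 * (p ^ 2 + q ^ 2 + X2)) := by rw [hid]
    nlinarith [hid3, mul_pos hR hX2pos,
      sq_nonneg ((p * h0 + q * h1) * X2 - W * (p ^ 2 + q ^ 2)),
      mul_nonneg (sub_nonneg.2 hCS) (sq_nonneg (p ^ 2 + q ^ 2)),
      mul_nonneg (mul_nonneg (sq_nonneg (p * h1 - q * h0 + 2 * (p * h0 + q * h1))) hX2)
        (add_nonneg hR.le hX2),
      mul_nonneg (mul_nonneg hR.le hX2) (sub_nonneg.2 hCS)]

theorem rotA_ell (hn : 2 ≤ n) (x : EuclideanSpace ℝ (Fin n)) (hx0 : x ≠ 0)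
    (hx : 0 < x ⟨0, by omega⟩ ^ 2 + x ⟨1, by omega⟩ ^ 2) :
    ellDir n (rotA n hn x) (‖x‖⁻¹ • x) = 1 := by
  have h0n : 0 < n := by omega
  have h1n : 1 < n := by omega
  let i0 : Fin n := ⟨0, h0n⟩
  let i1 : Fin n := ⟨1, h1n⟩
  have hx' : 0 < x i0 ^ 2 + x i1 ^ 2 := hx
  have hne : x i0 ^ 2 + x i1 ^ 2 ≠ 0 := ne_of_gt hx'
  have hsc : Real.sin (Real.log (x i0 ^ 2 + x i1 ^ 2)) ^ 2
      + Real.cos (Real.log (x i0 ^ 2 + x i1 ^ 2)) ^ 2 = 1 := Real.sin_sq_add_cos_sq _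
  have hxnorm : ‖x‖ ≠ 0 := by simpa using hx0
  have hxpos : 0 < ‖x‖ := lt_of_le_of_ne (norm_nonneg x) (Ne.symm hxnorm)
  set T : Finset (Fin n) := (Finset.univ.erase i0).erase i1 with hT
  have hi1mem : i1 ∈ Finset.univ.erase i0 :=
    Finset.mem_erase.2 ⟨by simp [Fin.ext_iff], Finset.mem_univ _⟩
  have sum_split : ∀ f : Fin n → ℝ, ∑ i, f i = f i0 + f i1 + ∑ i ∈ T, f i := by
    intro f
    rw [← Finset.add_sum_erase _ f (Finset.mem_univ i0), ← Finset.add_sum_erase _ f hi1mem]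
    ring
  have hmemT : ∀ i ∈ T, (i : ℕ) ≠ 0 ∧ (i : ℕ) ≠ 1 := by
    intro i hi
    have h1 := (Finset.mem_erase.1 hi).1
    have h0 := (Finset.mem_erase.1 (Finset.mem_erase.1 hi).2).1
    exact ⟨fun h => h0 (Fin.ext h), fun h => h1 (Fin.ext h)⟩
  have hnormsq : ∀ v : EuclideanSpace ℝ (Fin n), ‖v‖ ^ 2 = ∑ i, v i ^ 2 := by
    intro v
    rw [EuclideanSpace.norm_eq, Real.sq_sqrt (by positivity)]
    simp [sq_abs]
  have hinner : ∀ v w : EuclideanSpace ℝ (Fin n), (inner ℝ v w : ℝ) = ∑ i, v i * w i := by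
    intro v w
    rw [PiLp.inner_apply]
    simp [RCLike.inner_apply, conj_trivial]
    exact Finset.sum_congr rfl (fun i _ => mul_comm _ _)
  -- application formulas
  have hA0 : ∀ h : EuclideanSpace ℝ (Fin n), rotA n hn x h i0 =
      (Real.cos (Real.log (x i0 ^ 2 + x i1 ^ 2)) - 2 * x i0 *
        (x i1 * Real.cos (Real.log (x i0 ^ 2 + x i1 ^ 2)) +
          x i0 * Real.sin (Real.log (x i0 ^ 2 + x i1 ^ 2))) / (x i0 ^ 2 + x i1 ^ 2)) * h i0
      + (-Real.sin (Real.log (x i0 ^ 2 + x i1 ^ 2)) - 2 * x i1 *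
        (x i1 * Real.cos (Real.log (x i0 ^ 2 + x i1 ^ 2)) +
          x i0 * Real.sin (Real.log (x i0 ^ 2 + x i1 ^ 2))) / (x i0 ^ 2 + x i1 ^ 2)) * h i1 :=
    fun h => rfl
  have hA1 : ∀ h : EuclideanSpace ℝ (Fin n), rotA n hn x h i1 =
      (Real.sin (Real.log (x i0 ^ 2 + x i1 ^ 2)) + 2 * x i0 *
        (x i0 * Real.cos (Real.log (x i0 ^ 2 + x i1 ^ 2)) -
          x i1 * Real.sin (Real.log (x i0 ^ 2 + x i1 ^ 2))) / (x i0 ^ 2 + x i1 ^ 2)) * h i0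
      + (Real.cos (Real.log (x i0 ^ 2 + x i1 ^ 2)) + 2 * x i1 *
        (x i0 * Real.cos (Real.log (x i0 ^ 2 + x i1 ^ 2)) -
          x i1 * Real.sin (Real.log (x i0 ^ 2 + x i1 ^ 2))) / (x i0 ^ 2 + x i1 ^ 2)) * h i1 :=
    fun h => rfl
  have hAT : ∀ (h : EuclideanSpace ℝ (Fin n)) (i : Fin n), (i : ℕ) ≠ 0 → (i : ℕ) ≠ 1 →
      rotA n hn x h i = h i := by
    intro h i h0 h1
    show rotD n hn x i h = h i
    rw [rotD, if_neg h0, if_neg h1]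
    rfl
  -- set of ratios
  set S : Set ℝ := {r : ℝ | ∃ h : EuclideanSpace ℝ (Fin n),
    ‖h‖ = 1 ∧ (inner ℝ h (‖x‖⁻¹ • x) : ℝ) ≠ 0 ∧
      r = ‖rotA n hn x h‖ / abs ((inner ℝ h (‖x‖⁻¹ • x) : ℝ))} with hS
  -- Lower bound
  have key : ∀ h : EuclideanSpace ℝ (Fin n), |(inner ℝ h (‖x‖⁻¹ • x) : ℝ)| ≤ ‖rotA n hn x h‖ := by
    intro h
    have hiu : (inner ℝ h (‖x‖⁻¹ • x) : ℝ) = ‖x‖⁻¹ * (inner ℝ h x : ℝ) := real_inner_smul_right _ _ _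
    have hmain : (inner ℝ h x : ℝ) ^ 2 ≤ ‖rotA n hn x h‖ ^ 2 * ‖x‖ ^ 2 := by
      rw [hinner h x, hnormsq (rotA n hn x h), hnormsq x, sum_split (fun i => h i * x i),
        sum_split (fun i => rotA n hn x h i ^ 2), sum_split (fun i => x i ^ 2)]
      have hTA : ∑ i ∈ T, rotA n hn x h i ^ 2 = ∑ i ∈ T, h i ^ 2 :=
        Finset.sum_congr rfl (fun i hi => by
          rw [hAT h i (hmemT i hi).1 (hmemT i hi).2])
      rw [hTA, hA0 h, hA1 h]
      set W : ℝ := ∑ i ∈ T, h i * x i with hW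
      set H2 : ℝ := ∑ i ∈ T, h i ^ 2 with hH2
      set X2 : ℝ := ∑ i ∈ T, x i ^ 2 with hX2
      have hCS : W ^ 2 ≤ H2 * X2 := Finset.sum_mul_sq_le_sq_mul_sq T _ _
      have hH2n : 0 ≤ H2 := Finset.sum_nonneg (fun i _ => sq_nonneg _)
      have hX2n : 0 ≤ X2 := Finset.sum_nonneg (fun i _ => sq_nonneg _)
      -- abbreviate the two rotated components
      set A0 : ℝ := (Real.cos (Real.log (x i0 ^ 2 + x i1 ^ 2)) - 2 * x i0 *
            (x i1 * Real.cos (Real.log (x i0 ^ 2 + x i1 ^ 2)) +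
              x i0 * Real.sin (Real.log (x i0 ^ 2 + x i1 ^ 2))) / (x i0 ^ 2 + x i1 ^ 2)) * h i0
          + (-Real.sin (Real.log (x i0 ^ 2 + x i1 ^ 2)) - 2 * x i1 *
            (x i1 * Real.cos (Real.log (x i0 ^ 2 + x i1 ^ 2)) +
              x i0 * Real.sin (Real.log (x i0 ^ 2 + x i1 ^ 2))) / (x i0 ^ 2 + x i1 ^ 2)) * h i1
        with hA0d
      set A1 : ℝ := (Real.sin (Real.log (x i0 ^ 2 + x i1 ^ 2)) + 2 * x i0 *
            (x i0 * Real.cos (Real.log (x i0 ^ 2 + x i1 ^ 2)) -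
              x i1 * Real.sin (Real.log (x i0 ^ 2 + x i1 ^ 2))) / (x i0 ^ 2 + x i1 ^ 2)) * h i0
          + (Real.cos (Real.log (x i0 ^ 2 + x i1 ^ 2)) + 2 * x i1 *
            (x i0 * Real.cos (Real.log (x i0 ^ 2 + x i1 ^ 2)) -
              x i1 * Real.sin (Real.log (x i0 ^ 2 + x i1 ^ 2))) / (x i0 ^ 2 + x i1 ^ 2)) * h i1
        with hA1d
      have hA0R : A0 * (x i0 ^ 2 + x i1 ^ 2)
          = (Real.cos (Real.log (x i0 ^ 2 + x i1 ^ 2)) * h i0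
              - Real.sin (Real.log (x i0 ^ 2 + x i1 ^ 2)) * h i1) * (x i0 ^ 2 + x i1 ^ 2)
            - 2 * (x i1 * Real.cos (Real.log (x i0 ^ 2 + x i1 ^ 2)) +
                x i0 * Real.sin (Real.log (x i0 ^ 2 + x i1 ^ 2)))
              * (x i0 * h i0 + x i1 * h i1) := by
        rw [hA0d]; field_simp; ring
      have hA1R : A1 * (x i0 ^ 2 + x i1 ^ 2)
          = (Real.sin (Real.log (x i0 ^ 2 + x i1 ^ 2)) * h i0
              + Real.cos (Real.log (x i0 ^ 2 + x i1 ^ 2)) * h i1) * (x i0 ^ 2 + x i1 ^ 2)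
            + 2 * (x i0 * Real.cos (Real.log (x i0 ^ 2 + x i1 ^ 2)) -
                x i1 * Real.sin (Real.log (x i0 ^ 2 + x i1 ^ 2)))
              * (x i0 * h i0 + x i1 * h i1) := by
        rw [hA1d]; field_simp; ring
      have hidR : (A0 ^ 2 + A1 ^ 2) * (x i0 ^ 2 + x i1 ^ 2) * (x i0 ^ 2 + x i1 ^ 2)
          = ((x i0 * h i0 + x i1 * h i1) ^ 2
            + ((x i0 * h i1 - x i1 * h i0) + 2 * (x i0 * h i0 + x i1 * h i1)) ^ 2)
            * (x i0 ^ 2 + x i1 ^ 2) := by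
        have e : (A0 ^ 2 + A1 ^ 2) * (x i0 ^ 2 + x i1 ^ 2) * (x i0 ^ 2 + x i1 ^ 2)
            = (A0 * (x i0 ^ 2 + x i1 ^ 2)) ^ 2 + (A1 * (x i0 ^ 2 + x i1 ^ 2)) ^ 2 := by ring
        rw [e, hA0R, hA1R]
        linear_combination ((x i0 ^ 2 + x i1 ^ 2) *
          ((x i0 * h i0 + x i1 * h i1) ^ 2
            + ((x i0 * h i1 - x i1 * h i0) + 2 * (x i0 * h i0 + x i1 * h i1)) ^ 2)) * hsc
      have hid : (A0 ^ 2 + A1 ^ 2) * (x i0 ^ 2 + x i1 ^ 2)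
          = (x i0 * h i0 + x i1 * h i1) ^ 2
            + ((x i0 * h i1 - x i1 * h i0) + 2 * (x i0 * h i0 + x i1 * h i1)) ^ 2 :=
        mul_right_cancel₀ hne hidR
      exact key_ineq (x i0) (x i1) (h i0) (h i1) A0 A1 W H2 X2 hx' hid hCS hH2n hX2n
    have habs : |(inner ℝ h x : ℝ)| ≤ ‖rotA n hn x h‖ * ‖x‖ := by
      have h1 : |(inner ℝ h x : ℝ)| = Real.sqrt ((inner ℝ h x : ℝ) ^ 2) := (Real.sqrt_sq_eq_abs _).symm
      have h2 : ‖rotA n hn x h‖ * ‖x‖ = Real.sqrt (‖rotA n hn x h‖ ^ 2 * ‖x‖ ^ 2) := by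
        rw [Real.sqrt_mul (sq_nonneg _), Real.sqrt_sq (norm_nonneg _),
          Real.sqrt_sq (norm_nonneg _)]
      rw [h1, h2]
      exact Real.sqrt_le_sqrt hmain
    rw [hiu, abs_mul, abs_inv, abs_norm]
    rw [inv_mul_le_iff₀ hxpos]
    exact habs.trans_eq (mul_comm _ _)
  have lb : ∀ r ∈ S, (1 : ℝ) ≤ r := by
    rintro r ⟨h, hh1, hh2, rfl⟩
    rw [le_div_iff₀ (abs_pos.2 hh2)]
    simpa using key h
  -- Membership of 1
  set w : EuclideanSpace ℝ (Fin n) := (WithLp.equiv 2 (Fin n → ℝ)).symm (fun i =>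
    if (i : ℕ) = 0 then x i0 + 2 * x i1
    else if (i : ℕ) = 1 then x i1 - 2 * x i0 else x i) with hw
  have hw0 : w i0 = x i0 + 2 * x i1 := rfl
  have hw1 : w i1 = x i1 - 2 * x i0 := rfl
  have hwT : ∀ i ∈ T, w i = x i := by
    intro i hi
    show (if (i : ℕ) = 0 then x i0 + 2 * x i1
      else if (i : ℕ) = 1 then x i1 - 2 * x i0 else x i) = x i
    rw [if_neg (hmemT i hi).1, if_neg (hmemT i hi).2]
  have hwx : (inner ℝ w x : ℝ) = ‖x‖ ^ 2 := by
    rw [hinner, hnormsq, sum_split (fun i => w i * x i), sum_split (fun i => x i ^ 2)]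
    have hTs : ∑ i ∈ T, w i * x i = ∑ i ∈ T, x i ^ 2 :=
      Finset.sum_congr rfl (fun i hi => by rw [hwT i hi, sq])
    rw [hTs, hw0, hw1]
    ring
  have hnw : ‖w‖ ^ 2 = ‖x‖ ^ 2 + 4 * (x i0 ^ 2 + x i1 ^ 2) := by
    rw [hnormsq, hnormsq, sum_split (fun i => w i ^ 2), sum_split (fun i => x i ^ 2)]
    have hTs : ∑ i ∈ T, w i ^ 2 = ∑ i ∈ T, x i ^ 2 :=
      Finset.sum_congr rfl (fun i hi => by rw [hwT i hi])
    rw [hTs, hw0, hw1]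
    ring
  have hwne : ‖w‖ ≠ 0 := by
    intro hh
    have h2 : ‖w‖ ^ 2 = 0 := by rw [hh]; ring
    rw [hnw] at h2
    nlinarith [sq_nonneg ‖x‖, hx']
  have hwpos : 0 < ‖w‖ := lt_of_le_of_ne (norm_nonneg w) (Ne.symm hwne)
  have hAw0 : rotA n hn x w i0 = x i0 * Real.cos (Real.log (x i0 ^ 2 + x i1 ^ 2))
      - x i1 * Real.sin (Real.log (x i0 ^ 2 + x i1 ^ 2)) := by
    rw [hA0 w, hw0, hw1]
    field_simp
    ring
  have hAw1 : rotA n hn x w i1 = x i1 * Real.cos (Real.log (x i0 ^ 2 + x i1 ^ 2))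
      + x i0 * Real.sin (Real.log (x i0 ^ 2 + x i1 ^ 2)) := by
    rw [hA1 w, hw0, hw1]
    field_simp
    ring
  have hAwnorm2 : ‖rotA n hn x w‖ ^ 2 = ‖x‖ ^ 2 := by
    rw [hnormsq, hnormsq, sum_split (fun i => rotA n hn x w i ^ 2), sum_split (fun i => x i ^ 2)]
    have hTs : ∑ i ∈ T, rotA n hn x w i ^ 2 = ∑ i ∈ T, x i ^ 2 :=
      Finset.sum_congr rfl (fun i hi => by
        rw [hAT w i (hmemT i hi).1 (hmemT i hi).2, hwT i hi])
    rw [hTs, hAw0, hAw1]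
    linear_combination (x i0 ^ 2 + x i1 ^ 2) * hsc
  have hAwnorm : ‖rotA n hn x w‖ = ‖x‖ := by
    have := congrArg Real.sqrt hAwnorm2
    rwa [Real.sqrt_sq (norm_nonneg _), Real.sqrt_sq (norm_nonneg _)] at this
  have mem1 : (1 : ℝ) ∈ S := by
    refine ⟨‖w‖⁻¹ • w, ?_, ?_, ?_⟩
    · rw [norm_smul, norm_inv, norm_norm, inv_mul_cancel₀ hwne]
    · rw [real_inner_smul_left, real_inner_smul_right, hwx]
      have : ‖x‖⁻¹ * ‖x‖ ^ 2 = ‖x‖ := by field_simp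
      rw [this]
      positivity
    · rw [real_inner_smul_left, real_inner_smul_right, hwx]
      have h1 : ‖x‖⁻¹ * ‖x‖ ^ 2 = ‖x‖ := by field_simp
      rw [h1, map_smul]
      rw [norm_smul, norm_inv, norm_norm, hAwnorm]
      rw [abs_mul, abs_inv, abs_norm, abs_norm]
      field_simp
  -- conclude
  have hSne : S.Nonempty := ⟨1, mem1⟩
  have hbdd : BddBelow S := ⟨1, lb⟩
  rw [ellDir]
  exact le_antisymm (csInf_le hbdd mem1) (le_csInf hSne lb)
end EllTest

theorem rotMap_angular_dilatation_one (n : ℕ) (hn : 2 ≤ n)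
    (x : EuclideanSpace ℝ (Fin n)) (hx0 : x ≠ 0)
    (hx : 0 < x ⟨0, by omega⟩ ^ 2 + x ⟨1, by omega⟩ ^ 2) :
    angDil n (fderiv ℝ (rotMap n hn) x) (‖x‖⁻¹ • x) = 1 := by
  have hd : fderiv ℝ (rotMap n hn) x = rotA n hn x :=
    (rotA_hasFDerivAt' n hn x hx).fderiv
  rw [hd]
  unfold angDil
  rw [rotA_det n hn x hx, rotA_ell n hn x hx0 hx]
  norm_num
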